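/- There exists a constant C₁ > 0 such that for all u ∈ V and v ∈ H, the sequence B(u, v) belongs to H and |B(u, v)| ≤ C₁ ‖u‖ |v|. -/

import Mathlib

set_option maxHeartbeats 1000000


open Complex MeasureTheory Filter Topology

noncomputable section

/-- The wave numbers `kₙ = k₀ · 2ⁿ`. -/
def kk (k₀ : ℝ) (n : ℕ) : ℝ := k₀ * 2 ^ n

/-- The GOY nonlinearity `B(u,v)ₙ`; sequences are indexed from `1`, with the
convention that the `0`-th entry (playing the role of `u₀ = u₋₁ = 0`) vanishes. -/
def goyB (k₀ : ℝ) (u v : ℕ → ℂ) (n : ℕ) : ℂ :=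
  if n = 0 then 0 else
    Complex.I * (kk k₀ n : ℂ) *
      ((1 / 4) * (starRingEnd ℂ) (u (n + 1)) * (starRingEnd ℂ) (v (n - 1))
        - (1 / 2) * ((starRingEnd ℂ) (u (n + 1)) * (starRingEnd ℂ) (v (n + 2))
            + (starRingEnd ℂ) (u (n + 2)) * (starRingEnd ℂ) (v (n + 1)))
        + (1 / 8) * (starRingEnd ℂ) (u (n - 1)) * (starRingEnd ℂ) (v (n - 2)))

/-- Membership in `H`: square summability. -/
def memH (u : ℕ → ℂ) : Prop := Summable fun n => ‖u n‖ ^ 2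

/-- Membership in `V`. -/
def memV (k₀ : ℝ) (u : ℕ → ℂ) : Prop := Summable fun n => kk k₀ n ^ 2 * ‖u n‖ ^ 2

/-- `|u|² = ∑ₙ |uₙ|²`. -/
def hnormSq (u : ℕ → ℂ) : ℝ := ∑' n, ‖u n‖ ^ 2

/-- `‖u‖² = ∑ₙ kₙ²|uₙ|²`. -/
def vnormSq (k₀ : ℝ) (u : ℕ → ℂ) : ℝ := ∑' n, kk k₀ n ^ 2 * ‖u n‖ ^ 2

/-- `‖u‖_{V'}² = ∑ₙ kₙ⁻²|uₙ|²`. -/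
def vdualSq (k₀ : ℝ) (u : ℕ → ℂ) : ℝ := ∑' n, ‖u n‖ ^ 2 / kk k₀ n ^ 2

end

/-- `|B(u,v)| ≤ C₁ ‖u‖ |v|` for `u ∈ V`, `v ∈ H`. -/
theorem stmt_2 (k₀ : ℝ) (hk₀ : 0 < k₀) :
    ∃ C₁ : ℝ, 0 < C₁ ∧ ∀ u v : ℕ → ℂ, u 0 = 0 → v 0 = 0 → memV k₀ u → memH v →
      memH (goyB k₀ u v) ∧
      Real.sqrt (hnormSq (goyB k₀ u v)) ≤
        C₁ * Real.sqrt (vnormSq k₀ u) * Real.sqrt (hnormSq v) := by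
  refine ⟨4, by norm_num, fun u v hu0 hv0 hu hv => ?_⟩
  set S := Real.sqrt (vnormSq k₀ u) with hSdef
  set M := Real.sqrt (hnormSq v) with hMdef
  have hS : 0 ≤ S := Real.sqrt_nonneg _
  have hM : 0 ≤ M := Real.sqrt_nonneg _
  have hvnn : 0 ≤ vnormSq k₀ u := tsum_nonneg fun n => by positivity
  have hhnn : 0 ≤ hnormSq v := tsum_nonneg fun n => by positivity
  have hSsq : S ^ 2 = vnormSq k₀ u := Real.sq_sqrt hvnn
  have hMsq : M ^ 2 = hnormSq v := Real.sq_sqrt hhnn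
  have hkpos : ∀ m, 0 < kk k₀ m := fun m => by unfold kk; positivity
  -- every weighted coefficient of u is at most S
  have hka : ∀ m, kk k₀ m * ‖u m‖ ≤ S := by
    intro m
    rw [hSdef, Real.le_sqrt (mul_nonneg (hkpos m).le (norm_nonneg _)) hvnn]
    have := Summable.le_tsum hu m (fun j _ => by positivity)
    calc (kk k₀ m * ‖u m‖) ^ 2 = kk k₀ m ^ 2 * ‖u m‖ ^ 2 := by ring
      _ ≤ vnormSq k₀ u := this
  -- pointwise bound on B
  have hb : ∀ n, ‖goyB k₀ u v n‖ ≤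
      S * (‖v (n - 1)‖ + ‖v (n + 1)‖ + ‖v (n + 2)‖ + ‖v (n - 2)‖) := by
    intro n
    rcases eq_or_ne n 0 with rfl | hn
    · rw [goyB, if_pos rfl, norm_zero]
      have : (0:ℝ) ≤ ‖v (0 - 1)‖ + ‖v (0 + 1)‖ + ‖v (0 + 2)‖ + ‖v (0 - 2)‖ := by positivity
      exact mul_nonneg hS this
    · rw [goyB, if_neg hn]
      have h1 : kk k₀ n * ‖u (n + 1)‖ ≤ S := by
        refine le_trans ?_ (hka (n + 1))
        have : kk k₀ n ≤ kk k₀ (n + 1) := by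
          unfold kk
          have : (2:ℝ) ^ n ≤ 2 ^ (n + 1) := by
            apply pow_le_pow_right₀ (by norm_num) (by omega)
          nlinarith
        exact mul_le_mul_of_nonneg_right this (norm_nonneg _)
      have h2 : kk k₀ n * ‖u (n + 2)‖ ≤ S := by
        refine le_trans ?_ (hka (n + 2))
        have : kk k₀ n ≤ kk k₀ (n + 2) := by
          unfold kk
          have : (2:ℝ) ^ n ≤ 2 ^ (n + 2) := by
            apply pow_le_pow_right₀ (by norm_num) (by omega)
          nlinarith
        exact mul_le_mul_of_nonneg_right this (norm_nonneg _)
      have h3 : kk k₀ n * ‖u (n - 1)‖ ≤ 2 * S := by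
        obtain ⟨m, rfl⟩ := Nat.exists_eq_succ_of_ne_zero hn
        have hkeq : kk k₀ (m + 1) = 2 * kk k₀ m := by unfold kk; ring
        have : (m + 1) - 1 = m := rfl
        rw [this, hkeq, mul_assoc]
        exact mul_le_mul_of_nonneg_left (hka m) (by norm_num)
      have hnormeq : ‖Complex.I * (kk k₀ n : ℂ) *
          ((1 / 4) * (starRingEnd ℂ) (u (n + 1)) * (starRingEnd ℂ) (v (n - 1))
            - (1 / 2) * ((starRingEnd ℂ) (u (n + 1)) * (starRingEnd ℂ) (v (n + 2))
                + (starRingEnd ℂ) (u (n + 2)) * (starRingEnd ℂ) (v (n + 1)))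
            + (1 / 8) * (starRingEnd ℂ) (u (n - 1)) * (starRingEnd ℂ) (v (n - 2)))‖ ≤
          kk k₀ n * ((1 / 4) * ‖u (n + 1)‖ * ‖v (n - 1)‖
            + (1 / 2) * (‖u (n + 1)‖ * ‖v (n + 2)‖ + ‖u (n + 2)‖ * ‖v (n + 1)‖)
            + (1 / 8) * ‖u (n - 1)‖ * ‖v (n - 2)‖) := by
        rw [norm_mul, norm_mul, Complex.norm_I, one_mul, Complex.norm_real,
          Real.norm_eq_abs, abs_of_pos (hkpos n)]
        refine mul_le_mul_of_nonneg_left ?_ (le_of_lt (hkpos n))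
        calc ‖_ - _ + _‖ ≤ ‖(1 / 4 : ℂ) * (starRingEnd ℂ) (u (n + 1)) * (starRingEnd ℂ) (v (n - 1))
              - (1 / 2 : ℂ) * ((starRingEnd ℂ) (u (n + 1)) * (starRingEnd ℂ) (v (n + 2))
                + (starRingEnd ℂ) (u (n + 2)) * (starRingEnd ℂ) (v (n + 1)))‖
              + ‖(1 / 8 : ℂ) * (starRingEnd ℂ) (u (n - 1)) * (starRingEnd ℂ) (v (n - 2))‖ :=
            norm_add_le _ _
          _ ≤ ‖(1 / 4 : ℂ) * (starRingEnd ℂ) (u (n + 1)) * (starRingEnd ℂ) (v (n - 1))‖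
              + ‖(1 / 2 : ℂ) * ((starRingEnd ℂ) (u (n + 1)) * (starRingEnd ℂ) (v (n + 2))
                + (starRingEnd ℂ) (u (n + 2)) * (starRingEnd ℂ) (v (n + 1)))‖
              + ‖(1 / 8 : ℂ) * (starRingEnd ℂ) (u (n - 1)) * (starRingEnd ℂ) (v (n - 2))‖ := by
            gcongr
            exact norm_sub_le _ _
          _ ≤ _ := by
            simp only [norm_mul, RCLike.norm_conj]
            have hn2 : ‖(starRingEnd ℂ) (u (n + 1)) * (starRingEnd ℂ) (v (n + 2))
                + (starRingEnd ℂ) (u (n + 2)) * (starRingEnd ℂ) (v (n + 1))‖ ≤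
                ‖u (n + 1)‖ * ‖v (n + 2)‖ + ‖u (n + 2)‖ * ‖v (n + 1)‖ := by
              refine le_trans (norm_add_le _ _) ?_
              simp [norm_mul, RCLike.norm_conj]
            have e4 : ‖(1/4 : ℂ)‖ = 1/4 := by norm_num
            have e2 : ‖(1/2 : ℂ)‖ = 1/2 := by norm_num
            have e8 : ‖(1/8 : ℂ)‖ = 1/8 := by norm_num
            rw [e4, e2, e8]
            gcongr
      refine le_trans hnormeq ?_
      nlinarith [mul_le_mul_of_nonneg_right h1 (norm_nonneg (v (n - 1))),
        mul_le_mul_of_nonneg_right h1 (norm_nonneg (v (n + 2))),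
        mul_le_mul_of_nonneg_right h2 (norm_nonneg (v (n + 1))),
        mul_le_mul_of_nonneg_right h3 (norm_nonneg (v (n - 2))),
        mul_nonneg hS (norm_nonneg (v (n - 1))),
        mul_nonneg hS (norm_nonneg (v (n + 1))),
        mul_nonneg hS (norm_nonneg (v (n + 2))),
        mul_nonneg hS (norm_nonneg (v (n - 2)))]
  -- squared pointwise bound
  set g : ℕ → ℝ := fun n =>
    4 * S ^ 2 * (‖v (n - 1)‖ ^ 2 + ‖v (n + 1)‖ ^ 2 + ‖v (n + 2)‖ ^ 2 + ‖v (n - 2)‖ ^ 2)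
    with hgdef
  have hbg : ∀ n, ‖goyB k₀ u v n‖ ^ 2 ≤ g n := by
    intro n
    have h := hb n
    have hnn : (0:ℝ) ≤ ‖goyB k₀ u v n‖ := norm_nonneg _
    have hsq : ‖goyB k₀ u v n‖ ^ 2 ≤
        (S * (‖v (n - 1)‖ + ‖v (n + 1)‖ + ‖v (n + 2)‖ + ‖v (n - 2)‖)) ^ 2 := by
      apply pow_le_pow_left₀ hnn h
    refine le_trans hsq ?_
    simp only [hgdef]
    nlinarith [sq_nonneg (‖v (n-1)‖ - ‖v (n+1)‖), sq_nonneg (‖v (n-1)‖ - ‖v (n+2)‖),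
      sq_nonneg (‖v (n-1)‖ - ‖v (n-2)‖), sq_nonneg (‖v (n+1)‖ - ‖v (n+2)‖),
      sq_nonneg (‖v (n+1)‖ - ‖v (n-2)‖), sq_nonneg (‖v (n+2)‖ - ‖v (n-2)‖), sq_nonneg S]
  -- summability of the four shifted sequences
  have hs1 : Summable fun n => ‖v (n - 1)‖ ^ 2 :=
    (summable_nat_add_iff 1).mp (by unfold memH at hv; simpa using hv)
  have hs4 : Summable fun n => ‖v (n - 2)‖ ^ 2 :=
    (summable_nat_add_iff 2).mp (by unfold memH at hv; simpa using hv)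
  have hs2 : Summable fun n => ‖v (n + 1)‖ ^ 2 := (summable_nat_add_iff 1).mpr hv
  have hs3 : Summable fun n => ‖v (n + 2)‖ ^ 2 := (summable_nat_add_iff 2).mpr hv
  have hgsum : Summable g := by
    rw [hgdef]
    exact (((hs1.add hs2).add hs3).add hs4).mul_left _
  have memB : memH (goyB k₀ u v) :=
    hgsum.of_nonneg_of_le (fun n => sq_nonneg _) hbg
  -- compute the tsums of the shifted sequences
  have hv0sq : ‖v 0‖ ^ 2 = 0 := by rw [hv0]; simp
  have ht1 : ∑' n, ‖v (n - 1)‖ ^ 2 = hnormSq v := by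
    rw [Summable.tsum_eq_zero_add hs1]
    simp only [Nat.add_sub_cancel]
    rw [show ((0:ℕ) - 1) = 0 from rfl, hv0sq, zero_add]
    rfl
  have ht4 : ∑' n, ‖v (n - 2)‖ ^ 2 = hnormSq v := by
    rw [Summable.tsum_eq_zero_add hs4]
    have : (fun n : ℕ => ‖v (n + 1 - 2)‖ ^ 2) = fun n : ℕ => ‖v (n - 1)‖ ^ 2 := by
      rfl
    rw [show ((0:ℕ) - 2) = 0 from rfl, hv0sq, zero_add, this, ht1]
  have ht2 : ∑' n, ‖v (n + 1)‖ ^ 2 = hnormSq v := by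
    have := Summable.tsum_eq_zero_add hv
    rw [hv0sq, zero_add] at this
    exact this.symm
  have ht3 : ∑' n, ‖v (n + 2)‖ ^ 2 ≤ hnormSq v := by
    have h2 := Summable.tsum_eq_zero_add hs2
    rw [ht2] at h2
    have hv1 : (fun n : ℕ => ‖v (n + 1 + 1)‖ ^ 2) = fun n : ℕ => ‖v (n + 2)‖ ^ 2 := by
      funext n; congr 2
    rw [hv1] at h2
    nlinarith [sq_nonneg ‖v (0 + 1)‖]
  -- total bound on the tsum
  have htB : hnormSq (goyB k₀ u v) ≤ 16 * S ^ 2 * M ^ 2 := by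
    have hA : hnormSq (goyB k₀ u v) ≤ ∑' n, g n := Summable.tsum_le_tsum hbg memB hgsum
    refine le_trans hA ?_
    have hsplit : ∑' n, g n = 4 * S ^ 2 *
        ((∑' n, ‖v (n - 1)‖ ^ 2) + (∑' n, ‖v (n + 1)‖ ^ 2) + (∑' n, ‖v (n + 2)‖ ^ 2)
          + (∑' n, ‖v (n - 2)‖ ^ 2)) := by
      rw [hgdef]
      rw [tsum_mul_left, Summable.tsum_add ((hs1.add hs2).add hs3) hs4,
        Summable.tsum_add (hs1.add hs2) hs3, Summable.tsum_add hs1 hs2]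
    rw [hsplit, ht1, ht2, ht4, ← hMsq]
    nlinarith [sq_nonneg S, sq_nonneg M]
  refine ⟨memB, ?_⟩
  have hfin : Real.sqrt (hnormSq (goyB k₀ u v)) ≤ Real.sqrt (16 * S ^ 2 * M ^ 2) :=
    Real.sqrt_le_sqrt htB
  rw [show (16 : ℝ) * S ^ 2 * M ^ 2 = (4 * S * M) ^ 2 by ring,
    Real.sqrt_sq (by positivity)] at hfin
  exact hfin
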